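/- Let A and B be nonempty finite sets, g : A → B a bijection, and u : A → ℝ, v : B → ℝ such that for all s, s' ∈ A, u(s) ≤ u(s') if and only if v(g(s)) ≤ v(g(s')). Then there exists a surjective strictly increasing function α : ℝ → ℝ with α ∘ u = v ∘ g. -/

import Mathlib

open Function

/-- Extend a strictly monotone surjection below a point, prescribing one more value. -/
lemma stepExtend (α : ℝ → ℝ) (hs : Surjective α) (hm : StrictMono α)
    (a a' b b' : ℝ) (haa : a < a') (hbb : b < b') (hα : α a' = b') :
    ∃ β : ℝ → ℝ, Surjective β ∧ StrictMono β ∧ β a = b ∧ ∀ x, a' ≤ x → β x = α x := by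
  have hne : a' - a ≠ 0 := by intro h; linarith [sub_eq_zero.1 h]
  set k : ℝ := (b' - b) / (a' - a) with hk_def
  have hk : 0 < k := div_pos (by linarith) (by linarith)
  have hkey : b + (a' - a) * k = b' := by
    rw [hk_def, mul_div_assoc', mul_comm, mul_div_assoc, div_self hne]
    ring
  refine ⟨fun x => if x < a then x - a + b else if x < a' then b + (x - a) * k else α x,
    ?_, ?_, ?_, ?_⟩
  · -- surjective
    intro z
    rcases lt_or_ge z b with hz | hz
    · refine ⟨z - b + a, ?_⟩
      have h1 : z - b + a < a := by linarith
      simp only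
      rw [if_pos h1]; ring
    · rcases lt_or_ge z b' with hz' | hz'
      · refine ⟨a + (z - b) / k, ?_⟩
        have h1 : ¬ (a + (z - b) / k < a) := by
          have : 0 ≤ (z - b) / k := div_nonneg (by linarith) hk.le
          linarith
        have h2 : a + (z - b) / k < a' := by
          have : (z - b) / k < a' - a := by
            rw [div_lt_iff₀ hk]
            nlinarith [hkey]
          linarith
        simp only
        rw [if_neg h1, if_pos h2]
        have : (z - b) / k * k = z - b := div_mul_cancel₀ _ hk.ne'
        nlinarith [this]
      · obtain ⟨x, hx⟩ := hs z
        have hxa' : a' ≤ x := by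
          by_contra h
          push_neg at h
          have := hm h
          rw [hx, hα] at this
          linarith
        have h1 : ¬ x < a := by linarith
        have h2 : ¬ x < a' := by linarith
        refine ⟨x, ?_⟩
        simp only
        rw [if_neg h1, if_neg h2]
        exact hx
  · -- strict mono
    intro x y hxy
    simp only
    by_cases hx1 : x < a
    · by_cases hy1 : y < a
      · rw [if_pos hx1, if_pos hy1]; linarith
      · by_cases hy2 : y < a'
        · rw [if_pos hx1, if_neg hy1, if_pos hy2]
          push_neg at hy1
          nlinarith [mul_nonneg (by linarith : (0:ℝ) ≤ y - a) hk.le]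
        · rw [if_pos hx1, if_neg hy1, if_neg hy2]
          push_neg at hy2
          have : b' ≤ α y := hα ▸ hm.monotone hy2
          linarith
    · by_cases hx2 : x < a'
      · have hy1 : ¬ y < a := by push_neg at hx1 ⊢; linarith
        by_cases hy2 : y < a'
        · rw [if_neg hx1, if_pos hx2, if_neg hy1, if_pos hy2]
          have := mul_lt_mul_of_pos_right (show x - a < y - a by linarith) hk
          linarith
        · rw [if_neg hx1, if_pos hx2, if_neg hy1, if_neg hy2]
          push_neg at hy2 hx1
          have h1 : b + (x - a) * k < b' := by
            nlinarith [hkey, mul_lt_mul_of_pos_right (show x - a < a' - a by linarith) hk]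
          have h2 : b' ≤ α y := hα ▸ hm.monotone hy2
          linarith
      · have hy1 : ¬ y < a := by push_neg at hx1 ⊢; linarith
        have hy2 : ¬ y < a' := by push_neg at hx2 ⊢; linarith
        rw [if_neg hx1, if_neg hx2, if_neg hy1, if_neg hy2]
        exact hm hxy
  · -- value at a
    simp only
    rw [if_neg (lt_irrefl a), if_pos haa]
    ring
  · -- agrees above a'
    intro x hx
    have h1 : ¬ x < a := by linarith
    have h2 : ¬ x < a' := by linarith
    simp only
    rw [if_neg h1, if_neg h2]

/-- Interpolate through the values of `f` along a strictly increasing list. -/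
lemma listExtend (l : List ℝ) (f : ℝ → ℝ) (hl : l.Chain' (· < ·))
    (hf : l.Chain' (fun a b => f a < f b)) :
    ∃ α : ℝ → ℝ, Surjective α ∧ StrictMono α ∧ ∀ t ∈ l, α t = f t := by
  induction l with
  | nil => exact ⟨id, surjective_id, strictMono_id, by simp⟩
  | cons a t ih =>
    match t, hl, hf, ih with
    | [], _, _, _ =>
        refine ⟨fun x => x - a + f a, fun z => ⟨z - f a + a, by ring⟩,
          fun x y h => by simpa using by linarith, ?_⟩
        intro s hs
        simp only [List.mem_singleton] at hs
        subst hs; simp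
    | a' :: t', hl, hf, ih =>
        obtain ⟨haa, hl'⟩ := List.isChain_cons_cons.1 hl
        obtain ⟨hbb, hf'⟩ := List.isChain_cons_cons.1 hf
        obtain ⟨α, hs, hm, hv⟩ := ih hl' hf'
        have hαa' : α a' = f a' := hv a' List.mem_cons_self
        obtain ⟨β, hβs, hβm, hβa, hβeq⟩ := stepExtend α hs hm a a' (f a) (f a') haa hbb hαa'
        refine ⟨β, hβs, hβm, ?_⟩
        intro x hx
        rcases List.mem_cons.1 hx with rfl | hx
        · exact hβa
        · have hx' : a' ≤ x := by
            rcases List.mem_cons.1 hx with rfl | hx2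
            · exact le_refl _
            · exact ((List.pairwise_cons.1 (List.isChain_iff_pairwise.1 hl')).1 x hx2).le
          rw [hβeq x hx']
          exact hv x hx

/-- If a bijection `g : A ≃ B` between nonempty finite sets preserves the
preference order induced by the utilities `u` and `v`, then there exists a
surjective strictly increasing `α : ℝ → ℝ` with `α ∘ u = v ∘ g`. -/
theorem strictMono_of_ordinal_iso (A B : Type*) [Fintype A] [Fintype B]
    [Nonempty A] [Nonempty B] (g : A ≃ B) (u : A → ℝ) (v : B → ℝ)
    (hord : ∀ s s' : A, u s ≤ u s' ↔ v (g s) ≤ v (g s')) :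
    ∃ α : ℝ → ℝ, Function.Surjective α ∧ StrictMono α ∧
      ∀ s, α (u s) = v (g s) := by
  classical
  set w : ℝ → ℝ := fun t => if h : ∃ s, u s = t then v (g h.choose) else 0 with hw_def
  have hw : ∀ s, w (u s) = v (g s) := by
    intro s
    have h : ∃ s', u s' = u s := ⟨s, rfl⟩
    simp only [hw_def, dif_pos h]
    exact le_antisymm ((hord _ _).1 h.choose_spec.le) ((hord _ _).1 h.choose_spec.ge)
  set S : Finset ℝ := Finset.image u Finset.univ with hS_def
  set l : List ℝ := S.sort (· ≤ ·) with hl_def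
  have hmemS : ∀ x ∈ l, ∃ s, u s = x := by
    intro x hx
    rw [hl_def, Finset.mem_sort] at hx
    obtain ⟨s, _, hs⟩ := Finset.mem_image.1 hx
    exact ⟨s, hs⟩
  have hlp : l.Pairwise (· < ·) := (Finset.sortedLT_sort S).pairwise
  have hl : l.Chain' (· < ·) := hlp.isChain
  have hf : l.Chain' (fun a b => w a < w b) := by
    refine List.Pairwise.isChain (hlp.imp_of_mem ?_)
    intro x y hx hy hxy
    obtain ⟨s, rfl⟩ := hmemS x hx
    obtain ⟨s', rfl⟩ := hmemS y hy
    rw [hw, hw]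
    have h1 : ¬ u s' ≤ u s := not_le.2 hxy
    have h2 := mt (hord s' s).2 h1
    push_neg at h2
    exact h2
  obtain ⟨α, hs, hm, hv⟩ := listExtend l w hl hf
  refine ⟨α, hs, hm, fun s => ?_⟩
  have hmem : u s ∈ l := by
    rw [hl_def, Finset.mem_sort, hS_def]
    exact Finset.mem_image.2 ⟨s, Finset.mem_univ _, rfl⟩
  rw [hv (u s) hmem, hw]
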